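/- Let z be a positive integer, 0 < ε < 1/2, and d, k be positive integers, and let P = {e_1, …, e_d} ⊂ ℝ^{2d}. Suppose r_1, …, r_t ∈ ℝ^{2d} with weights w_1, …, w_t ∈ ℝ_{>0} and offset Δ ∈ ℝ form an ε-coreset with offset for (k,z)-clustering on P, and t < d. Then |Δ + ∑_{i=1}^t w_i·(‖r_i‖² + 1)^{z/2} − 2^{z/2}·d| ≤ ε·2^{z/2}·d. -/

import Mathlib

/-- The `i`-th standard basis vector of `ℝ^{2d}` (for `i < d`). -/
noncomputable def stdBasisPt (d : ℕ) (i : Fin d) : EuclideanSpace ℝ (Fin (2 * d)) :=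
  EuclideanSpace.single (Fin.castLE (by omega) i) 1

/-- The `(k,z)`-clustering cost of `P = {e_1, …, e_d} ⊂ ℝ^{2d}` in the set of centers `S`:
`cost(P, S) = ∑_{i} min_{s ∈ S} ‖e_i − s‖^z`. -/
noncomputable def kzCostP (z d : ℕ) (S : Finset (EuclideanSpace ℝ (Fin (2 * d)))) : ℝ :=
  ∑ i : Fin d, ⨅ s : S, ‖stdBasisPt d i - (s : EuclideanSpace ℝ (Fin (2 * d)))‖ ^ z

/-- `r, w, Δ` form an `ε`-coreset with offset for `(k,z)`-clustering on
`P = {e_1,…,e_d} ⊂ ℝ^{2d}`. -/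
def IsKZCoreset (z d k t : ℕ) (ε : ℝ) (r : Fin t → EuclideanSpace ℝ (Fin (2 * d)))
    (w : Fin t → ℝ) (Δ : ℝ) : Prop :=
  ∀ S : Finset (EuclideanSpace ℝ (Fin (2 * d))), S.card = k →
    |kzCostP z d S -
        (Δ + ∑ i, w i * ⨅ s : S, ‖r i - (s : EuclideanSpace ℝ (Fin (2 * d)))‖ ^ z)| ≤
      ε * kzCostP z d S

/-- for an `ε`-coreset with offset for `(k,z)`-clustering of `{e_1,…,e_d}`
with `t < d` points, `Δ + ∑ wᵢ(‖rᵢ‖²+1)^{z/2}` lies within `ε·2^{z/2}·d` of `2^{z/2}·d`. -/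
theorem kz_coreset_offset_norm_sum
    (z : ℕ) (hz : 0 < z) (d k t : ℕ) (hd : 0 < d) (hk : 0 < k)
    (ε : ℝ) (hε0 : 0 < ε) (hε : ε < 1 / 2)
    (r : Fin t → EuclideanSpace ℝ (Fin (2 * d))) (w : Fin t → ℝ)
    (hw : ∀ i, 0 < w i) (Δ : ℝ)
    (hcore : IsKZCoreset z d k t ε r w Δ) (ht : t < d) :
    |Δ + (∑ i, w i * (‖r i‖ ^ 2 + 1) ^ ((z : ℝ) / 2)) - (2 : ℝ) ^ ((z : ℝ) / 2) * d| ≤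
      ε * (2 : ℝ) ^ ((z : ℝ) / 2) * d := by
  classical
  let f : Fin d ⊕ Fin t → EuclideanSpace ℝ (Fin (2 * d)) := Sum.elim (stdBasisPt d) r
  set W : Submodule ℝ (EuclideanSpace ℝ (Fin (2 * d))) :=
    Submodule.span ℝ (Set.range f) with hWdef
  have hWrank : Module.finrank ℝ W ≤ d + t := by
    have := finrank_range_le_card (R := ℝ) f
    simpa [Set.finrank, Fintype.card_sum] using this
  have hEdim : Module.finrank ℝ (EuclideanSpace ℝ (Fin (2 * d))) = 2 * d :=
    finrank_euclideanSpace_fin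
  have hperp : 0 < Module.finrank ℝ Wᗮ := by
    have h := Submodule.finrank_add_finrank_orthogonal (K := W)
    omega
  have hne : Wᗮ ≠ ⊥ := by
    intro h
    rw [h] at hperp
    simp at hperp
  obtain ⟨v, hvW, hv0⟩ := Submodule.exists_mem_ne_zero_of_ne_bot hne
  set u : EuclideanSpace ℝ (Fin (2 * d)) := (‖v‖⁻¹ : ℝ) • v with hudef
  have hu1 : ‖u‖ = 1 := norm_smul_inv_norm (𝕜 := ℝ) hv0
  have hu0 : u ≠ 0 := by
    intro h; rw [h] at hu1; simp at hu1
  have huW : u ∈ Wᗮ := Wᗮ.smul_mem _ hvW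
  have horth : ∀ x ∈ W, (inner ℝ x u : ℝ) = 0 := fun x hx =>
    (Submodule.mem_orthogonal W u).mp huW x hx
  -- key norm computation
  have hnorm : ∀ (p : EuclideanSpace ℝ (Fin (2 * d))) (c : ℝ), (inner ℝ p u : ℝ) = 0 →
      ‖p - c • u‖ ^ z = (‖p‖ ^ 2 + c ^ 2) ^ ((z : ℝ) / 2) := by
    intro p c hpu
    have hsq : ‖p - c • u‖ ^ 2 = ‖p‖ ^ 2 + c ^ 2 := by
      rw [norm_sub_sq_real, real_inner_smul_right, hpu, norm_smul, hu1]
      simp [Real.norm_eq_abs, mul_pow, sq_abs]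
    have hnn : (0:ℝ) ≤ ‖p‖ ^ 2 + c ^ 2 := by positivity
    have h1 : ‖p - c • u‖ = Real.sqrt (‖p‖ ^ 2 + c ^ 2) := by
      rw [← hsq, Real.sqrt_sq (norm_nonneg _)]
    rw [h1, Real.sqrt_eq_rpow, ← Real.rpow_natCast ((‖p‖ ^ 2 + c ^ 2) ^ ((1:ℝ)/2)) z,
      ← Real.rpow_mul hnn, show (1/2 : ℝ) * z = (z : ℝ) / 2 by ring]
  -- the set of centers
  set g : Fin k → EuclideanSpace ℝ (Fin (2 * d)) :=
    fun j => (((j : ℕ) : ℝ) + 1) • u with hgdef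
  have hginj : Function.Injective g := by
    intro j j' h
    have h' : (((j : ℕ) : ℝ) + 1) • u = (((j' : ℕ) : ℝ) + 1) • u := h
    have h2 : ((((j : ℕ) : ℝ) + 1) - (((j' : ℕ) : ℝ) + 1)) • u = 0 := by
      rw [sub_smul, h', sub_self]
    rcases smul_eq_zero.mp h2 with h3 | h3
    · have h4 : ((j : ℕ) : ℝ) = ((j' : ℕ) : ℝ) := by linarith [sub_eq_zero.mp h3]
      exact Fin.ext (Nat.cast_injective h4)
    · exact absurd h3 hu0
  set S : Finset (EuclideanSpace ℝ (Fin (2 * d))) := Finset.image g Finset.univ with hSdef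
  have hScard : S.card = k := by
    rw [hSdef, Finset.card_image_of_injective _ hginj, Finset.card_univ, Fintype.card_fin]
  have hmem1 : (1 : ℝ) • u ∈ S := by
    refine Finset.mem_image.mpr ⟨⟨0, hk⟩, Finset.mem_univ _, ?_⟩
    simp [hgdef]
  haveI hSne : Nonempty ↥S := ⟨⟨_, hmem1⟩⟩
  -- infimum computation
  have hinf : ∀ p : EuclideanSpace ℝ (Fin (2 * d)), (inner ℝ p u : ℝ) = 0 →
      (⨅ s : S, ‖p - (s : EuclideanSpace ℝ (Fin (2 * d)))‖ ^ z)
        = (‖p‖ ^ 2 + 1) ^ ((z : ℝ) / 2) := by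
    intro p hpu
    have hbdd : BddBelow (Set.range fun s : S =>
        ‖p - (s : EuclideanSpace ℝ (Fin (2 * d)))‖ ^ z) := by
      refine ⟨0, ?_⟩
      rintro x ⟨s, rfl⟩
      positivity
    apply le_antisymm
    · calc (⨅ s : S, ‖p - (s : EuclideanSpace ℝ (Fin (2 * d)))‖ ^ z)
          ≤ ‖p - (1:ℝ) • u‖ ^ z := ciInf_le hbdd (⟨(1:ℝ) • u, hmem1⟩ : ↥S)
        _ = (‖p‖ ^ 2 + 1) ^ ((z : ℝ) / 2) := by rw [hnorm p 1 hpu]; norm_num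
    · apply le_ciInf
      rintro ⟨s, hs⟩
      obtain ⟨j, _, rfl⟩ := Finset.mem_image.mp hs
      show (‖p‖ ^ 2 + 1) ^ ((z : ℝ) / 2) ≤ ‖p - (((j : ℕ) : ℝ) + 1) • u‖ ^ z
      rw [hnorm p _ hpu]
      apply Real.rpow_le_rpow (by positivity) _ (by positivity)
      have h5 : (1:ℝ) ≤ ((j : ℕ) : ℝ) + 1 := by
        have : (0:ℝ) ≤ ((j:ℕ) : ℝ) := Nat.cast_nonneg _
        linarith
      nlinarith
  -- cost computation
  have hcost : kzCostP z d S = (2 : ℝ) ^ ((z : ℝ) / 2) * d := by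
    rw [kzCostP]
    have hterm : ∀ i : Fin d,
        (⨅ s : S, ‖stdBasisPt d i - (s : EuclideanSpace ℝ (Fin (2 * d)))‖ ^ z)
          = (2 : ℝ) ^ ((z : ℝ) / 2) := by
      intro i
      have hmemW : stdBasisPt d i ∈ W :=
        Submodule.subset_span ⟨Sum.inl i, rfl⟩
      have h1 : ‖stdBasisPt d i‖ = 1 := by
        rw [stdBasisPt, EuclideanSpace.norm_single]; norm_num
      rw [hinf _ (horth _ hmemW), h1]
      norm_num
    rw [Finset.sum_congr rfl (fun i _ => hterm i)]
    simp [mul_comm]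
  have hr : ∀ i : Fin t,
    (⨅ s : S, ‖r i - (s : EuclideanSpace ℝ (Fin (2 * d)))‖ ^ z)
      = (‖r i‖ ^ 2 + 1) ^ ((z : ℝ) / 2) := fun i =>
    hinf _ (horth _ (Submodule.subset_span ⟨Sum.inr i, rfl⟩))
  have h := hcore S hScard
  rw [hcost] at h
  rw [Finset.sum_congr rfl (fun i _ => by rw [hr i])] at h
  rw [abs_sub_comm] at h
  calc |Δ + (∑ i, w i * (‖r i‖ ^ 2 + 1) ^ ((z : ℝ) / 2)) - (2 : ℝ) ^ ((z : ℝ) / 2) * d|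
      ≤ ε * ((2 : ℝ) ^ ((z : ℝ) / 2) * d) := h
    _ = ε * (2 : ℝ) ^ ((z : ℝ) / 2) * d := by ring
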